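/- arXiv:1909.02540 — 2 statements merged into one kernel-verified Lean document; each statement's English description precedes it below -/
import Mathlib

section
/- Let ρ be a full-rank density matrix on ℂ^d, let F be a nonempty closed set of density matrices on ℂ^d with R_F(ρ) < ∞, and let F' be a set of density matrices on ℂ^{d'}. Let (L, G) be a probabilistic free protocol from (F, ℂ^d) to (F', ℂ^{d'}). Suppose p := Tr(L(ρ)) > 0, and the output state τ := L(ρ)/p satisfies ⟨ψ, τ ψ⟩ ≥ 1 − ε for some unit vector ψ ∈ ℂ^{d'} and ε ≥ 0. Then ε/p ≥ λ_min(ρ)·(1 − f_ψ)/(1 + R_F(ρ)), where f_ψ := sup_{ω ∈ F'} ⟨ψ, ω ψ⟩. (Theorem 1, probabilistic case: trade-off between success probability and purification error.) -/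
open scoped Matrix ComplexOrder

noncomputable section

/-- A density matrix: a positive semidefinite complex matrix with unit trace. -/
def IsDensity {n : Type*} [Fintype n] (A : Matrix n n ℂ) : Prop :=
  A.PosSemidef ∧ A.trace = 1

/-- The smallest eigenvalue of a Hermitian matrix (`0` by convention otherwise). -/
noncomputable def minEig {n : Type*} [Fintype n] [DecidableEq n] (A : Matrix n n ℂ) : ℝ :=
  letI := Classical.propDecidable A.IsHermitian
  if h : A.IsHermitian then ⨅ i, h.eigenvalues i else 0

/-- The overlap `⟨ψ, A ψ⟩` (as a real number). -/
noncomputable def overlap {n : Type*} [Fintype n] (A : Matrix n n ℂ) (ψ : n → ℂ) : ℝ :=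
  (dotProduct (star ψ) (A.mulVec ψ)).re

/-- `f_ψ = sup_{ω ∈ F} ⟨ψ, ω ψ⟩`, with the convention `sup ∅ = 0`. -/
noncomputable def maxOverlap {n : Type*} [Fintype n] (F : Set (Matrix n n ℂ)) (ψ : n → ℂ) : ℝ :=
  sSup ((fun ω => overlap ω ψ) '' F)

/-- A positive map: it sends positive semidefinite matrices to positive semidefinite matrices. -/
def PosMap {n m : Type*} [Fintype n] [Fintype m]
    (Φ : Matrix n n ℂ →ₗ[ℂ] Matrix m m ℂ) : Prop :=
  ∀ X, X.PosSemidef → (Φ X).PosSemidef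

/-- A trace-preserving map. -/
def TracePreserving {n m : Type*} [Fintype n] [Fintype m]
    (Φ : Matrix n n ℂ →ₗ[ℂ] Matrix m m ℂ) : Prop :=
  ∀ X, (Φ X).trace = X.trace

/-- The feasible set for the generalized robustness:
`{ s ≥ 0 : ∃ density σ, (ρ + sσ)/(1+s) ∈ F }`.  Its nonemptiness encodes `R_F(ρ) < ∞`. -/
def RobustSet {n : Type*} [Fintype n] (F : Set (Matrix n n ℂ)) (ρ : Matrix n n ℂ) : Set ℝ :=
  {s : ℝ | 0 ≤ s ∧ ∃ σ : Matrix n n ℂ, IsDensity σ ∧ (1 + s)⁻¹ • (ρ + s • σ) ∈ F}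

/-- The generalized robustness `R_F(ρ)`. -/
noncomputable def Robustness {n : Type*} [Fintype n] (F : Set (Matrix n n ℂ))
    (ρ : Matrix n n ℂ) : ℝ :=
  sInf (RobustSet F ρ)

set_option linter.unusedSectionVars false
set_option maxHeartbeats 1000000

open Matrix

section Helpers

variable {n : Type*} [Fintype n] [DecidableEq n]

lemma quad_spectral (A : Matrix n n ℂ) (hA : A.IsHermitian) (x : n → ℂ) :
    (dotProduct (star x) (A *ᵥ x)).re
      = ∑ i, hA.eigenvalues i *
          Complex.normSq ((star (hA.eigenvectorUnitary : Matrix n n ℂ) *ᵥ x) i) := by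
  set U : Matrix n n ℂ := (hA.eigenvectorUnitary : Matrix n n ℂ)
  set c : n → ℂ := star U *ᵥ x with hc
  have h1 : dotProduct (star x) (A *ᵥ x)
      = dotProduct (star c) ((Matrix.diagonal (RCLike.ofReal ∘ hA.eigenvalues)) *ᵥ c) := by
    conv_lhs => rw [hA.spectral_theorem, Unitary.conjStarAlgAut_apply]
    rw [← mulVec_mulVec, ← mulVec_mulVec, hc]
    rw [star_mulVec, star_eq_conjTranspose, conjTranspose_conjTranspose,
      dotProduct_mulVec]
  rw [h1, dotProduct, Complex.re_sum]
  congr 1; ext i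
  simp [Matrix.mulVec_diagonal, Complex.normSq]
  ring

lemma normc_spectral (A : Matrix n n ℂ) (hA : A.IsHermitian) (x : n → ℂ) :
    ∑ i, Complex.normSq ((star (hA.eigenvectorUnitary : Matrix n n ℂ) *ᵥ x) i)
      = (dotProduct (star x) x).re := by
  set U : Matrix n n ℂ := (hA.eigenvectorUnitary : Matrix n n ℂ)
  set c : n → ℂ := star U *ᵥ x with hc
  have h1 : dotProduct (star c) c = dotProduct (star x) x := by
    rw [hc, star_mulVec, star_eq_conjTranspose, conjTranspose_conjTranspose,
      dotProduct_mulVec, vecMul_vecMul, ← star_eq_conjTranspose U,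
      (Matrix.mem_unitaryGroup_iff).mp hA.eigenvectorUnitary.2]
    simp
  have h2 : (dotProduct (star c) c).re = ∑ i, Complex.normSq (c i) := by
    rw [dotProduct, Complex.re_sum]
    congr 1; ext i
    simp [Complex.normSq]
  rw [← h2, h1]

lemma trace_re_eq_sum (A : Matrix n n ℂ) (hA : A.IsHermitian) :
    (A.trace).re = ∑ i, hA.eigenvalues i := by
  conv_lhs => rw [hA.spectral_theorem, Unitary.conjStarAlgAut_apply]
  rw [Matrix.trace_mul_cycle]
  rw [(Matrix.mem_unitaryGroup_iff').mp hA.eigenvectorUnitary.2, one_mul,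
    Matrix.trace_diagonal]
  simp [Complex.re_sum]

lemma quad_im_zero (A : Matrix n n ℂ) (hA : A.IsHermitian) (x : n → ℂ) :
    (dotProduct (star x) (A *ᵥ x)).im = 0 := by
  have h : (starRingEnd ℂ) (dotProduct (star x) (A *ᵥ x))
      = dotProduct (star x) (A *ᵥ x) := by
    have h1 : star (dotProduct (star x) (A *ᵥ x))
        = dotProduct (star (A *ᵥ x)) (star (star x)) := by
      rw [Matrix.star_dotProduct_star, dotProduct_comm]
    rw [show (starRingEnd ℂ) (dotProduct (star x) (A *ᵥ x))
        = star (dotProduct (star x) (A *ᵥ x)) from rfl, h1, star_star,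
      Matrix.star_mulVec, ← Matrix.dotProduct_mulVec, hA.eq]
  exact Complex.conj_eq_iff_im.mp h

lemma posSemidef_of_re (A : Matrix n n ℂ) (hA : A.IsHermitian)
    (h : ∀ x, 0 ≤ (dotProduct (star x) (A *ᵥ x)).re) : A.PosSemidef :=
  PosSemidef.of_dotProduct_mulVec_nonneg hA fun x => RCLike.nonneg_iff.mpr ⟨h x, quad_im_zero A hA x⟩

lemma quad_le_trace (A : Matrix n n ℂ) (hA : A.PosSemidef) (x : n → ℂ) :
    (dotProduct (star x) (A *ᵥ x)).re
      ≤ (A.trace).re * (dotProduct (star x) x).re := by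
  rw [quad_spectral A hA.1 x, trace_re_eq_sum A hA.1, ← normc_spectral A hA.1 x,
    Finset.sum_mul]
  refine Finset.sum_le_sum fun i _ => ?_
  have h1 := hA.eigenvalues_nonneg i
  have h2 : Complex.normSq ((star (hA.1.eigenvectorUnitary : Matrix n n ℂ) *ᵥ x) i)
      ≤ ∑ j, Complex.normSq ((star (hA.1.eigenvectorUnitary : Matrix n n ℂ) *ᵥ x) j) :=
    Finset.single_le_sum (fun j _ => Complex.normSq_nonneg _) (Finset.mem_univ i)
  exact mul_le_mul_of_nonneg_left h2 h1

lemma minEig_quad (A : Matrix n n ℂ) (hA : A.IsHermitian) (x : n → ℂ) :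
    minEig A * (dotProduct (star x) x).re
      ≤ (dotProduct (star x) (A *ᵥ x)).re := by
  have hm : minEig A = ⨅ i, hA.eigenvalues i := by
    rw [minEig]; exact dif_pos hA
  rw [quad_spectral A hA x, ← normc_spectral A hA x, hm, Finset.mul_sum]
  refine Finset.sum_le_sum fun i _ => ?_
  refine mul_le_mul_of_nonneg_right ?_ (Complex.normSq_nonneg _)
  exact ciInf_le (Set.Finite.bddBelow (Set.finite_range _)) i

lemma rsmul_eq (r : ℝ) (A : Matrix n n ℂ) : r • A = (r : ℂ) • A := by
  ext i j; simp [Complex.real_smul]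

lemma overlap_smul (r : ℝ) (A : Matrix n n ℂ) (ψ : n → ℂ) :
    overlap ((r : ℂ) • A) ψ = r * overlap A ψ := by
  simp [overlap, Matrix.smul_mulVec, dotProduct_smul, Complex.real_smul]

lemma overlap_sub (A B : Matrix n n ℂ) (ψ : n → ℂ) :
    overlap (A - B) ψ = overlap A ψ - overlap B ψ := by
  simp [overlap, Matrix.sub_mulVec, dotProduct_sub]

lemma overlap_nonneg {A : Matrix n n ℂ} (hA : A.PosSemidef) (ψ : n → ℂ) :
    0 ≤ overlap A ψ := hA.re_dotProduct_nonneg ψ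

lemma trace_re_nonneg {A : Matrix n n ℂ} (hA : A.PosSemidef) : 0 ≤ (A.trace).re := by
  rw [trace_re_eq_sum A hA.1]
  exact Finset.sum_nonneg fun i _ => hA.eigenvalues_nonneg i

lemma density_le_one {A : Matrix n n ℂ} (hA : A.PosSemidef) (htr : A.trace = 1) (x : n → ℂ) :
    (dotProduct (star x) (A *ᵥ x)).re ≤ (dotProduct (star x) x).re := by
  have h := quad_le_trace A hA x
  rw [htr] at h
  simpa using h

lemma psd_rsmul {A : Matrix n n ℂ} (hA : A.PosSemidef) {r : ℝ} (hr : 0 ≤ r) :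
    ((r : ℂ) • A).PosSemidef := by
  refine posSemidef_of_re _ ?_ fun x => ?_
  · unfold Matrix.IsHermitian
    rw [Matrix.conjTranspose_smul, hA.1.eq]
    norm_num
  · rw [Matrix.smul_mulVec, dotProduct_smul]
    have : ((r : ℂ) • dotProduct (star x) (A *ᵥ x)).re
        = r * (dotProduct (star x) (A *ᵥ x)).re := by
      simp [Complex.real_smul]
    rw [this]
    exact mul_nonneg hr (hA.re_dotProduct_nonneg x)

end Helpers

/-- **Theorem 1, probabilistic case.**  Trade-off between the success probability and the
purification error of any probabilistic free protocol `(L, G)`: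
`ε/p ≥ λ_min(ρ)(1 - f_ψ)/(1 + R_F(ρ))`. -/
theorem no_go_purification_probabilistic {d d' : ℕ}
    (ρ : Matrix (Fin d) (Fin d) ℂ) (hρ : IsDensity ρ) (hρfull : 0 < minEig ρ)
    (F : Set (Matrix (Fin d) (Fin d) ℂ)) (hFne : F.Nonempty) (hFcl : IsClosed F)
    (hFden : ∀ ω ∈ F, IsDensity ω)
    (hRfin : (RobustSet F ρ).Nonempty)
    (F' : Set (Matrix (Fin d') (Fin d') ℂ)) (hF'den : ∀ ω ∈ F', IsDensity ω)
    (L G : Matrix (Fin d) (Fin d) ℂ →ₗ[ℂ] Matrix (Fin d') (Fin d') ℂ)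
    (hLpos : PosMap L) (hGpos : PosMap G)
    (hTP : ∀ X, (L X).trace + (G X).trace = X.trace)
    (hLfree : ∀ ω ∈ F, ∃ t : ℝ, 0 ≤ t ∧ ∃ ω' ∈ F', L ω = (t : ℂ) • ω')
    (p : ℝ) (hp : p = ((L ρ).trace).re) (hppos : 0 < p)
    (τ : Matrix (Fin d') (Fin d') ℂ) (hτ : τ = p⁻¹ • L ρ)
    (ψ : Fin d' → ℂ) (hψ : dotProduct (star ψ) ψ = 1)
    (ε : ℝ) (hε : 0 ≤ ε)
    (hfid : 1 - ε ≤ overlap τ ψ) :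
    minEig ρ * (1 - maxOverlap F' ψ) / (1 + Robustness F ρ) ≤ ε / p := by
  set lam := minEig ρ with hlam
  set f := maxOverlap F' ψ with hfdef
  have hlam0 : 0 ≤ lam := le_of_lt hρfull
  have hψre : (dotProduct (star ψ) ψ).re = 1 := by rw [hψ]; simp
  -- overlaps with F' are at most 1
  have hf_ub : ∀ ω' ∈ F', overlap ω' ψ ≤ 1 := by
    intro ω' h
    have hd := hF'den ω' h
    have h2 := density_le_one hd.1 hd.2 ψ
    rw [hψre] at h2
    exact h2
  have hbdd : BddAbove ((fun ω => overlap ω ψ) '' F') := by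
    refine ⟨1, ?_⟩
    rintro _ ⟨ω', hω', rfl⟩
    exact hf_ub ω' hω'
  have hf1 : f ≤ 1 := by
    rw [hfdef, maxOverlap]
    refine Real.sSup_le ?_ zero_le_one
    rintro _ ⟨ω', hω', rfl⟩
    exact hf_ub ω' hω'
  -- p ≤ 1
  have hp1 : p ≤ 1 := by
    have hG : 0 ≤ ((G ρ).trace).re := trace_re_nonneg (hGpos ρ hρ.1)
    have h3 : ((L ρ).trace).re + ((G ρ).trace).re = 1 := by
      have h4 := congrArg Complex.re (hTP ρ)
      rw [hρ.2] at h4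
      simpa using h4
    rw [hp]; linarith
  -- overlap of L ρ with ψ
  have hoverLρ : p * (1 - ε) ≤ overlap (L ρ) ψ := by
    have h5 : overlap τ ψ = p⁻¹ * overlap (L ρ) ψ := by
      rw [hτ, rsmul_eq, overlap_smul]
    have h6 := hfid
    rw [h5] at h6
    have h7 : p * (1 - ε) ≤ p * (p⁻¹ * overlap (L ρ) ψ) :=
      mul_le_mul_of_nonneg_left h6 (le_of_lt hppos)
    rwa [← mul_assoc, mul_inv_cancel₀ (ne_of_gt hppos), one_mul] at h7
  -- main per-s inequality
  have key : ∀ s ∈ RobustSet F ρ, lam * (1 - f) ≤ ε / p * (1 + s) := by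
    rintro s ⟨hs0, σ, hσ, hωF⟩
    have h1s : (0:ℝ) < 1 + s := by linarith
    have h1sC : ((1:ℝ) + s : ℂ) ≠ 0 := by
      exact_mod_cast Complex.ofReal_ne_zero.mpr (ne_of_gt h1s)
    set ω : Matrix (Fin d) (Fin d) ℂ := (1 + s)⁻¹ • (ρ + s • σ) with hωdef
    have hωden : IsDensity ω := hFden ω hωF
    obtain ⟨t, ht0, ω', hω'F', hLω⟩ := hLfree ω hωF
    have hω'den := hF'den ω' hω'F'
    -- ω as complex smul
    have hωC : ω = ((((1:ℝ) + s)⁻¹ : ℝ) : ℂ) • (ρ + ((s : ℝ) : ℂ) • σ) := by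
      rw [hωdef, rsmul_eq, rsmul_eq]
    -- (1+s) • ω - ρ = s • σ
    have hM1 : (((1:ℝ) + s : ℂ)) • ω - ρ = ((s:ℝ) : ℂ) • σ := by
      rw [hωC, smul_smul]
      rw [show ((1:ℝ) + s : ℂ) * ((((1:ℝ) + s)⁻¹ : ℝ) : ℂ) = 1 by
        push_cast
        field_simp]
      rw [one_smul, add_sub_cancel_left]
    -- trace inequality: p ≤ (1+s) * t
    have htrace : p ≤ (1 + s) * t := by
      have hpsd : (L ((((1:ℝ) + s : ℂ)) • ω - ρ)).PosSemidef := by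
        rw [hM1]
        exact hLpos _ (psd_rsmul hσ.1 hs0)
      have h8 : 0 ≤ ((L ((((1:ℝ) + s : ℂ)) • ω - ρ)).trace).re := trace_re_nonneg hpsd
      rw [map_sub, LinearMap.map_smul, hLω, Matrix.trace_sub, Matrix.trace_smul, Matrix.trace_smul,
        hω'den.2] at h8
      have h9 : (((1:ℝ) + s : ℂ) • ((t:ℂ) • (1:ℂ)) - (L ρ).trace).re
          = (1 + s) * t - p := by
        rw [hp]
        simp [Complex.sub_re, Complex.ofReal_mul]
      rw [h9] at h8
      linarith
    -- ρ - lam • ω is psd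
    have hM2 : (ρ - ((lam : ℝ) : ℂ) • ω).PosSemidef := by
      refine posSemidef_of_re _ ?_ fun x => ?_
      · refine Matrix.IsHermitian.sub hρ.1.1 ?_
        unfold Matrix.IsHermitian
        rw [Matrix.conjTranspose_smul, hωden.1.1.eq]
        norm_num
      · rw [Matrix.sub_mulVec, dotProduct_sub, Complex.sub_re,
          Matrix.smul_mulVec, dotProduct_smul]
        have h10 : (((lam : ℝ) : ℂ) • dotProduct (star x) (ω *ᵥ x)).re
            = lam * (dotProduct (star x) (ω *ᵥ x)).re := by
          simp [Complex.real_smul]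
        rw [h10]
        have h11 := minEig_quad ρ hρ.1.1 x
        have h12 := density_le_one hωden.1 hωden.2 x
        rw [← hlam] at h11
        nlinarith
    -- apply L
    have hN : (L ρ - ((lam : ℝ) : ℂ) • ((t : ℂ) • ω')).PosSemidef := by
      have := hLpos _ hM2
      rwa [map_sub, LinearMap.map_smul, hLω] at this
    -- Q(N) ≥ 0
    have hQ : overlap (L ρ - ((lam : ℝ) : ℂ) • ((t : ℂ) • ω')) ψ
        ≤ ((L ρ - ((lam : ℝ) : ℂ) • ((t : ℂ) • ω')).trace).re := by
      have h13 := quad_le_trace _ hN ψ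
      rw [hψre, mul_one] at h13
      exact h13
    have htrN : ((L ρ - ((lam : ℝ) : ℂ) • ((t : ℂ) • ω')).trace).re = p - lam * t := by
      rw [Matrix.trace_sub, Matrix.trace_smul, Matrix.trace_smul, hω'den.2, hp]
      simp [Complex.sub_re]
    have hovN : overlap (L ρ - ((lam : ℝ) : ℂ) • ((t : ℂ) • ω')) ψ
        = overlap (L ρ) ψ - lam * (t * overlap ω' ψ) := by
      rw [overlap_sub]
      congr 1
      rw [overlap_smul, overlap_smul]
    rw [htrN, hovN] at hQ
    -- overlap ω' ψ ≤ f, ≥ 0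
    have hof : overlap ω' ψ ≤ f := le_csSup hbdd ⟨ω', hω'F', rfl⟩
    -- combine: lam * t * (1 - f) ≤ p * ε
    have h1f : (0:ℝ) ≤ 1 - f := by linarith
    have hc : lam * t * overlap ω' ψ ≤ lam * t * f :=
      mul_le_mul_of_nonneg_left hof (mul_nonneg hlam0 ht0)
    have hkey1 : lam * t * (1 - f) ≤ p * ε := by nlinarith [hQ, hoverLρ, hc]
    have ha : lam * (1 - f) * p ≤ lam * (1 - f) * ((1 + s) * t) :=
      mul_le_mul_of_nonneg_left htrace (mul_nonneg hlam0 h1f)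
    have hb : (1 + s) * (lam * t * (1 - f)) ≤ (1 + s) * (p * ε) :=
      mul_le_mul_of_nonneg_left hkey1 (le_of_lt h1s)
    have hkey2 : lam * (1 - f) * p ≤ (1 + s) * (p * ε) := by nlinarith [ha, hb]
    -- divide by p
    have hkey3 : lam * (1 - f) ≤ (1 + s) * ε := by
      have hd : lam * (1 - f) * p ≤ ((1 + s) * ε) * p := by nlinarith [hkey2]
      exact le_of_mul_le_mul_right hd hppos
    have hεp : ε ≤ ε / p := by
      rw [le_div_iff₀ hppos]
      nlinarith
    calc lam * (1 - f) ≤ (1 + s) * ε := hkey3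
      _ ≤ (1 + s) * (ε / p) := mul_le_mul_of_nonneg_left hεp (le_of_lt h1s)
      _ = ε / p * (1 + s) := by ring
  -- conclude with infimum
  have hR0 : 0 ≤ Robustness F ρ := le_csInf hRfin fun s hs => hs.1
  have h1R : (0:ℝ) < 1 + Robustness F ρ := by linarith
  rw [div_le_iff₀ h1R]
  have hc0 : 0 ≤ ε / p := div_nonneg hε (le_of_lt hppos)
  rcases eq_or_lt_of_le hc0 with hc | hc
  · obtain ⟨s₀, hs₀⟩ := hRfin
    have := key s₀ hs₀
    rw [← hc] at this ⊢
    linarith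
  · have hle : (lam * (1 - f) - ε / p) / (ε / p) ≤ Robustness F ρ := by
      refine le_csInf hRfin fun s hs => ?_
      rw [div_le_iff₀ hc]
      have := key s hs
      linarith
    rw [div_le_iff₀ hc] at hle
    linarith

end
end

section
/- Let F be a nonempty set of density matrices on ℂ^d and F' a closed set of density matrices on ℂ^{d'}. Let E : M_d(ℂ) → M_{d'}(ℂ) be a positive trace-preserving linear map with E(ω) ∈ F' for every ω ∈ F. Let ρ be a full-rank density matrix on ℂ^d and ψ ∈ ℂ^{d'} a unit vector with |ψ⟩⟨ψ| ∉ F'. Then E(ρ) ≠ |ψ⟩⟨ψ|. (Deterministic exact purification of a full-rank state to a pure resource state is impossible.) -/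
open scoped Matrix ComplexOrder

noncomputable section

section Helpers
open Matrix
set_option linter.unusedSectionVars false
variable {n : Type*} [Fintype n] [DecidableEq n]


variable {n : Type*} [Fintype n] [DecidableEq n]

/-- trace equals sum of eigenvalues -/
lemma myTrace_eq {A : Matrix n n ℂ} (hA : A.IsHermitian) :
    A.trace = ∑ i, (hA.eigenvalues i : ℂ) := by
  nth_rewrite 1 [hA.spectral_theorem]
  rw [Unitary.conjStarAlgAut_apply, Matrix.trace_mul_comm, ← Matrix.mul_assoc,
    Matrix.mem_unitaryGroup_iff'.mp hA.eigenvectorUnitary.2, one_mul, trace_diagonal]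
  rfl

lemma myConj (c : ℝ) {A : Matrix n n ℂ} (hA : A.IsHermitian) :
    A - (c:ℂ) • 1 = (hA.eigenvectorUnitary : Matrix n n ℂ) *
      diagonal (fun i => ((hA.eigenvalues i - c : ℝ) : ℂ)) *
      (hA.eigenvectorUnitary : Matrix n n ℂ)ᴴ := by
  nth_rewrite 1 [hA.spectral_theorem]
  have h1 : ((c:ℂ) • 1 : Matrix n n ℂ) = (hA.eigenvectorUnitary : Matrix n n ℂ) *
      ((c:ℂ) • 1) * (star hA.eigenvectorUnitary : Matrix n n ℂ) := by
    rw [Matrix.mul_smul, Matrix.smul_mul, mul_one,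
      Matrix.mem_unitaryGroup_iff.mp hA.eigenvectorUnitary.2]
  have hD : diagonal ((RCLike.ofReal ∘ hA.eigenvalues : n → ℂ)) - (c:ℂ) • (1 : Matrix n n ℂ)
      = diagonal (fun i => ((hA.eigenvalues i - c : ℝ) : ℂ)) := by
    ext i j
    by_cases h : i = j <;> simp [h, Matrix.diagonal_apply, Matrix.one_apply, Matrix.sub_apply]
  rw [Unitary.conjStarAlgAut_apply, h1, ← Matrix.sub_mul, ← Matrix.mul_sub, hD, Matrix.star_eq_conjTranspose]

lemma mySubPSD {A : Matrix n n ℂ} (hA : A.IsHermitian) {c : ℝ}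
    (h : ∀ i, c ≤ hA.eigenvalues i) : (A - (c:ℂ) • 1).PosSemidef := by
  rw [myConj c hA]
  exact Matrix.PosSemidef.mul_mul_conjTranspose_same
    (Matrix.posSemidef_diagonal_iff.mpr fun i => by
      simpa using ((sub_nonneg.mpr (h i)) : (0:ℝ) ≤ hA.eigenvalues i - c)) _

lemma mySub'PSD {A : Matrix n n ℂ} (hA : A.IsHermitian) {c : ℝ}
    (h : ∀ i, hA.eigenvalues i ≤ c) : ((c:ℂ) • 1 - A).PosSemidef := by
  have key : (c:ℂ) • 1 - A = (hA.eigenvectorUnitary : Matrix n n ℂ) *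
      diagonal (fun i => ((c - hA.eigenvalues i : ℝ) : ℂ)) *
      (hA.eigenvectorUnitary : Matrix n n ℂ)ᴴ := by
    rw [← neg_sub A ((c:ℂ) • 1), myConj c hA, ← Matrix.neg_mul, ← Matrix.mul_neg,
      Matrix.diagonal_neg]
    congr 2
    funext i
    simp [Complex.ofReal_sub]
  rw [key]
  exact Matrix.PosSemidef.mul_mul_conjTranspose_same
    (Matrix.posSemidef_diagonal_iff.mpr fun i => by
      simpa using ((sub_nonneg.mpr (h i)) : (0:ℝ) ≤ c - hA.eigenvalues i)) _

lemma mySmulPSD {A : Matrix n n ℂ} (hA : A.PosSemidef) {c : ℝ} (hc : 0 ≤ c) :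
    ((c:ℂ) • A).PosSemidef := by
  refine Matrix.PosSemidef.of_dotProduct_mulVec_nonneg ?_ ?_
  · show ((c:ℂ) • A)ᴴ = (c:ℂ) • A
    rw [Matrix.conjTranspose_smul, hA.1.eq]
    simp [Complex.conj_ofReal]
  · intro x
    rw [Matrix.smul_mulVec, dotProduct_smul, smul_eq_mul]
    exact mul_nonneg (by exact_mod_cast hc) (hA.dotProduct_mulVec_nonneg x)

section vmv
variable (ψ : n → ℂ)

lemma myQherm : (vecMulVec ψ (star ψ))ᴴ = vecMulVec ψ (star ψ) := by
  ext i j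
  simp [Matrix.conjTranspose_apply, Matrix.vecMulVec_apply, mul_comm]

lemma myQQ (hψ : dotProduct (star ψ) ψ = 1) :
    vecMulVec ψ (star ψ) * vecMulVec ψ (star ψ) = vecMulVec ψ (star ψ) := by
  ext i j
  show ∑ k, (ψ i * star ψ k) * (ψ k * star ψ j) = ψ i * star ψ j
  calc ∑ k, (ψ i * star ψ k) * (ψ k * star ψ j)
      = (ψ i * star ψ j) * ∑ k, star ψ k * ψ k := by
        rw [Finset.mul_sum]; exact Finset.sum_congr rfl fun k _ => by ring
    _ = ψ i * star ψ j := by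
        rw [show ∑ k, star ψ k * ψ k = dotProduct (star ψ) ψ from rfl, hψ, mul_one]

lemma myQtrace : (vecMulVec ψ (star ψ)).trace = dotProduct (star ψ) ψ := by
  simp [Matrix.trace, Matrix.diag, Matrix.vecMulVec_apply, dotProduct, mul_comm]

lemma mySandwich (M : Matrix n n ℂ) :
    vecMulVec ψ (star ψ) * M * vecMulVec ψ (star ψ)
      = (dotProduct (star ψ) (M.mulVec ψ)) • vecMulVec ψ (star ψ) := by
  ext i j
  show ∑ l, (∑ k, (ψ i * star ψ k) * M k l) * (ψ l * star ψ j) = _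
  have : ∀ l, (∑ k, (ψ i * star ψ k) * M k l) * (ψ l * star ψ j)
      = ∑ k, (star ψ k * (M k l * ψ l)) * (ψ i * star ψ j) := by
    intro l
    rw [Finset.sum_mul]
    exact Finset.sum_congr rfl fun k _ => by ring
  simp only [this]
  rw [Finset.sum_comm]
  show ∑ k, ∑ l, (star ψ k * (M k l * ψ l)) * (ψ i * star ψ j)
      = (∑ k, star ψ k * ∑ l, M k l * ψ l) * (ψ i * star ψ j)
  rw [Finset.sum_mul]
  exact Finset.sum_congr rfl fun k _ => by rw [Finset.mul_sum, Finset.sum_mul]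

end vmv

lemma myAddEqZero {A B : Matrix n n ℂ} (hA : A.PosSemidef) (hB : B.PosSemidef)
    (h : A + B = 0) : B = 0 := by
  have hx : ∀ x, B.mulVec x = 0 := by
    intro x
    apply (hB.dotProduct_mulVec_zero_iff x).mp
    have h0 : dotProduct (star x) (A.mulVec x)
        + dotProduct (star x) (B.mulVec x) = 0 := by
      rw [← dotProduct_add, ← Matrix.add_mulVec, h, Matrix.zero_mulVec,
        dotProduct_zero]
    exact ((add_eq_zero_iff_of_nonneg (hA.dotProduct_mulVec_nonneg x) (hB.dotProduct_mulVec_nonneg x)).mp h0).2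
  ext i j
  have := congrFun (hx (Pi.single j 1)) i
  simpa [Matrix.mulVec_single] using this

end Helpers

/-- Deterministic exact purification of a full-rank state to a pure resource state
is impossible. -/
theorem no_go_exact_purification_deterministic {d d' : ℕ}
    (F : Set (Matrix (Fin d) (Fin d) ℂ)) (hFne : F.Nonempty)
    (hFden : ∀ ω ∈ F, IsDensity ω)
    (F' : Set (Matrix (Fin d') (Fin d') ℂ)) (hF'cl : IsClosed F')
    (hF'den : ∀ ω ∈ F', IsDensity ω)
    (E : Matrix (Fin d) (Fin d) ℂ →ₗ[ℂ] Matrix (Fin d') (Fin d') ℂ)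
    (hEpos : PosMap E) (hEtp : TracePreserving E)
    (hEfree : ∀ ω ∈ F, E ω ∈ F')
    (ρ : Matrix (Fin d) (Fin d) ℂ) (hρ : IsDensity ρ) (hρfull : 0 < minEig ρ)
    (ψ : Fin d' → ℂ) (hψ : dotProduct (star ψ) ψ = 1)
    (hψres : Matrix.vecMulVec ψ (star ψ) ∉ F') :
    E ρ ≠ Matrix.vecMulVec ψ (star ψ) := by
  intro hEρ
  set Q := Matrix.vecMulVec ψ (star ψ) with hQdef
  obtain ⟨ω, hω⟩ := hFne
  have hωden := hFden ω hω
  have hρH : ρ.IsHermitian := hρ.1.1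
  set ε := minEig ρ with hεdef
  have hεig : ∀ i, ε ≤ hρH.eigenvalues i := by
    intro i
    have hmin : minEig ρ = ⨅ i, hρH.eigenvalues i := dif_pos hρH
    rw [hεdef, hmin]
    exact ciInf_le (Set.Finite.bddBelow (Set.finite_range _)) i
  have h1 : (ρ - (ε:ℂ) • 1).PosSemidef := mySubPSD hρH hεig
  have hωH : ω.IsHermitian := hωden.1.1
  have hsum : ∑ i, hωH.eigenvalues i = 1 := by
    have h := myTrace_eq hωH
    rw [hωden.2] at h
    exact_mod_cast h.symm
  have hωle : ∀ i, hωH.eigenvalues i ≤ (1:ℝ) := fun i => by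
    rw [← hsum]
    exact Finset.single_le_sum (fun j _ => hωden.1.eigenvalues_nonneg j) (Finset.mem_univ i)
  have h2 : (((1:ℝ):ℂ) • 1 - ω).PosSemidef := mySub'PSD hωH hωle
  have h3 : ((ε:ℂ) • (((1:ℝ):ℂ) • 1 - ω)).PosSemidef := mySmulPSD h2 hρfull.le
  have hX : (ρ - (ε:ℂ) • ω).PosSemidef := by
    have hXeq : ρ - (ε:ℂ) • ω = (ρ - (ε:ℂ) • 1) + (ε:ℂ) • (((1:ℝ):ℂ) • 1 - ω) := by
      rw [smul_sub, smul_smul]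
      push_cast
      module
    rw [hXeq]
    exact h1.add h3
  set P := (1 : Matrix (Fin d') (Fin d') ℂ) - Q with hPdef
  have hQh := myQherm ψ
  have hQQ := myQQ ψ hψ
  have hPh : Pᴴ = P := by rw [hPdef, Matrix.conjTranspose_sub, Matrix.conjTranspose_one, hQh]
  have hPQP : P * Q * P = 0 := by
    rw [hPdef]
    simp [Matrix.sub_mul, Matrix.mul_sub, hQdef, hQQ]
  have hEdecomp : E ρ = E (ρ - (ε:ℂ) • ω) + (ε:ℂ) • E ω := by
    rw [map_sub, _root_.map_smul]
    abel
  have hzero : P * (E (ρ - (ε:ℂ) • ω)) * P + (ε:ℂ) • (P * E ω * P) = 0 := by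
    have hPEP : P * (E ρ) * P = 0 := by rw [hEρ, hPQP]
    have hEX : E (ρ - (ε:ℂ) • ω) = E ρ - (ε:ℂ) • E ω := by rw [map_sub, _root_.map_smul]
    rw [hEX, ← hPEP]
    simp only [Matrix.mul_sub, Matrix.sub_mul, Matrix.mul_smul, Matrix.smul_mul]
    abel
  have hA1 : (P * (E (ρ - (ε:ℂ) • ω)) * P).PosSemidef := by
    have h := (hEpos _ hX).mul_mul_conjTranspose_same P
    rwa [hPh] at h
  have hA2 : ((ε:ℂ) • (P * E ω * P)).PosSemidef := by
    refine mySmulPSD ?_ hρfull.le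
    have h := (hEpos ω hωden.1).mul_mul_conjTranspose_same P
    rwa [hPh] at h
  have hPEωP : P * E ω * P = 0 := by
    have h := myAddEqZero hA1 hA2 hzero
    have hεne : (ε:ℂ) ≠ 0 := Complex.ofReal_ne_zero.mpr hρfull.ne'
    exact (smul_eq_zero.mp h).resolve_left hεne
  obtain ⟨C, hC⟩ : ∃ C : Matrix (Fin d') (Fin d') ℂ, E ω = Cᴴ * C := by
    open scoped MatrixOrder Matrix.Norms.L2Operator in
    exact CStarAlgebra.nonneg_iff_eq_star_mul_self.mp (hEpos ω hωden.1).nonneg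
  have hCP : C * P = 0 := by
    rw [← Matrix.conjTranspose_mul_self_eq_zero (A := C * P), Matrix.conjTranspose_mul, hPh]
    calc P * Cᴴ * (C * P) = P * (Cᴴ * C) * P := by
          rw [Matrix.mul_assoc, Matrix.mul_assoc, Matrix.mul_assoc]
      _ = 0 := by rw [← hC, hPEωP]
  have hEωP : E ω * P = 0 := by rw [hC, Matrix.mul_assoc, hCP, Matrix.mul_zero]
  have hEωQ : E ω = E ω * Q := by
    rw [hPdef, Matrix.mul_sub, Matrix.mul_one, sub_eq_zero] at hEωP
    exact hEωP
  have hEωh : (E ω)ᴴ = E ω := (hEpos ω hωden.1).1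
  have hQEω : E ω = Q * E ω := by
    calc E ω = (E ω)ᴴ := hEωh.symm
      _ = (E ω * Q)ᴴ := by rw [← hEωQ]
      _ = Q * E ω := by rw [Matrix.conjTranspose_mul, hQh, hEωh]
  have hkey : E ω = (dotProduct (star ψ) ((E ω).mulVec ψ)) • Q := by
    have h5 : Q * E ω * Q = (dotProduct (star ψ) ((E ω).mulVec ψ)) • Q := by
      rw [hQdef]; exact mySandwich ψ (E ω)
    calc E ω = Q * E ω := hQEω
      _ = Q * (E ω * Q) := by rw [← hEωQ]
      _ = Q * E ω * Q := by rw [Matrix.mul_assoc]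
      _ = _ := h5
  have htr : (E ω).trace = 1 := by rw [hEtp ω, hωden.2]
  rw [hkey, Matrix.trace_smul, hQdef, myQtrace, hψ, smul_eq_mul, mul_one] at htr
  rw [htr, one_smul] at hkey
  exact hψres (hkey ▸ hEfree ω hω)
end
end
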